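/- Let F_q be a finite field, k ≥ 1, let α_{i_1},…,α_{i_{k−1}} ∈ F_q be distinct and b,c,λ,η ∈ F_q. Let B be the k×k matrix whose r-th row, for 1 ≤ r ≤ k−1, is (α_{i_1}^{r−1}, …, α_{i_{k−1}}^{r−1}, b^{r−1}−λc^{r−1}) and whose last row is (α_{i_1}^{k−1}+η α_{i_1}^k, …, α_{i_{k−1}}^{k−1}+η α_{i_{k−1}}^k, b^{k−1}−λc^{k−1}+η(b^k−λc^k)). Then det B = ∏_{1≤j<ℓ≤k−1}(α_{i_ℓ}−α_{i_j}) · (Ψ_J(b) − λ Ψ_J(c)), where J = {i_1,…,i_{k−1}} and Ψ_J(x) = ∏_{j=1}^{k−1}(x−α_{i_j})·(1 + ηx + η Σ_{j=1}^{k−1} α_{i_j}). -/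

import Mathlib

open Polynomial Finset

open Matrix

noncomputable section

variable {F : Type*} [Field F]

/-- The twisted polynomial `∑_{i<k} f_i x^i + η f_h x^{k-1+t}` from `V_{k,t,h,η}`. -/
def twPoly (k t h : ℕ) (η : F) (f : Fin k → F) : Polynomial F :=
  (∑ i : Fin k, Polynomial.C (f i) * Polynomial.X ^ (i : ℕ)) +
    Polynomial.C (η * if hh : h < k then f ⟨h, hh⟩ else 0) * Polynomial.X ^ (k - 1 + t)

/-- The coefficient `f_{k-1}` of a coefficient vector `f : Fin k → F`. -/
def topCoeffFin {k : ℕ} (f : Fin k → F) : F :=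
  if hk : k - 1 < k then f ⟨k - 1, hk⟩ else 0

/-- Codewords of the row-column twisted Reed-Solomon code. -/
def rctrsWords (k t h : ℕ) (η : F) {m : ℕ} (α : Fin m → F) (b c lam : F) :
    Set (Fin (m + 1) → F) :=
  { w | ∃ f : Fin k → F,
      w = Fin.snoc (fun i => (twPoly k t h η f).eval (α i))
            ((twPoly k t h η f).eval b - lam * (twPoly k t h η f).eval c) }

/-- The row-column twisted Reed-Solomon code `RCTRS_{h,t}(α,b,c,λ,η)`. -/
def RCTRS (k t h : ℕ) (η : F) {m : ℕ} (α : Fin m → F) (b c lam : F) :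
    Submodule F (Fin (m + 1) → F) :=
  Submodule.span F (rctrsWords k t h η α b c lam)

/-- Codewords of the extended row-column twisted Reed-Solomon code. -/
def rctrsWordsExt (k t h : ℕ) (η : F) {m : ℕ} (α : Fin m → F) (b c lam : F) :
    Set (Fin (m + 2) → F) :=
  { w | ∃ f : Fin k → F,
      w = Fin.snoc (Fin.snoc (fun i => (twPoly k t h η f).eval (α i))
            ((twPoly k t h η f).eval b - lam * (twPoly k t h η f).eval c)) (topCoeffFin f) }

/-- The extended row-column twisted Reed-Solomon code `RCTRS_{h,t}(α,b,c,λ,η,∞)`. -/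
def RCTRSext (k t h : ℕ) (η : F) {m : ℕ} (α : Fin m → F) (b c lam : F) :
    Submodule F (Fin (m + 2) → F) :=
  Submodule.span F (rctrsWordsExt k t h η α b c lam)

/-- Hamming weight. -/
def wt {n : ℕ} (x : Fin n → F) : ℕ := Nat.card {i : Fin n // x i ≠ 0}

/-- An `[n,k]` code is MDS if it has dimension `k` and minimum Hamming distance `n-k+1`. -/
def IsMDS {n : ℕ} (C : Submodule F (Fin n → F)) (k : ℕ) : Prop :=
  Module.finrank F C = k ∧ ∀ x ∈ C, x ≠ 0 → n - k + 1 ≤ wt x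

/-- The Schur square of a code. -/
def schurSq {n : ℕ} (C : Submodule F (Fin n → F)) : Submodule F (Fin n → F) :=
  Submodule.span F { w | ∃ x ∈ C, ∃ y ∈ C, w = x * y }

/-- Code equivalence: a permutation of coordinates followed by nonzero coordinatewise scaling. -/
def codeEquiv {n : ℕ} (C D : Submodule F (Fin n → F)) : Prop :=
  ∃ σ : Equiv.Perm (Fin n), ∃ v : Fin n → F, (∀ i, v i ≠ 0) ∧
    (C : Set (Fin n → F)) =
      (fun x : Fin n → F => fun i => v i * x (σ i)) '' (D : Set (Fin n → F))

/-- Generalized Reed-Solomon code. -/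
def GRS (k : ℕ) {n : ℕ} (α v : Fin n → F) : Submodule F (Fin n → F) :=
  Submodule.span F
    { w | ∃ f ∈ Polynomial.degreeLT F k, w = fun i => v i * Polynomial.eval (α i) f }

/-- Extended generalized Reed-Solomon code. -/
def GRSext (k : ℕ) {n : ℕ} (α v : Fin n → F) : Submodule F (Fin (n + 1) → F) :=
  Submodule.span F
    { w | ∃ f ∈ Polynomial.degreeLT F k,
        w = Fin.snoc (fun i => v i * Polynomial.eval (α i) f) (f.coeff (k - 1)) }

/-- A code of length `m+1` is non-RS if it is equivalent to no GRS and no extended GRS code. -/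
def IsNonRS {m : ℕ} (C : Submodule F (Fin (m + 1) → F)) : Prop :=
  (∀ (k' : ℕ) (α v : Fin (m + 1) → F), Function.Injective α → (∀ i, v i ≠ 0) →
      ¬ codeEquiv C (GRS k' α v)) ∧
  (∀ (k' : ℕ) (α v : Fin m → F), Function.Injective α → (∀ i, v i ≠ 0) →
      ¬ codeEquiv C (GRSext k' α v))

/-- Column twisted Reed-Solomon code. -/
def CTRS (k : ℕ) {m : ℕ} (α : Fin m → F) (b c lam : F) : Submodule F (Fin (m + 1) → F) :=
  Submodule.span F
    { w | ∃ f ∈ Polynomial.degreeLT F k,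
        w = Fin.snoc (fun i => Polynomial.eval (α i) f)
              (Polynomial.eval b f - lam * Polynomial.eval c f) }

/-- Extended column twisted Reed-Solomon code. -/
def CTRSext (k : ℕ) {m : ℕ} (α : Fin m → F) (b c lam : F) : Submodule F (Fin (m + 2) → F) :=
  Submodule.span F
    { w | ∃ f ∈ Polynomial.degreeLT F k,
        w = Fin.snoc (Fin.snoc (fun i => Polynomial.eval (α i) f)
              (Polynomial.eval b f - lam * Polynomial.eval c f)) (f.coeff (k - 1)) }

/-- `Φ_J(x) = ∏_{j∈J}(x−α_j)·(1 + (−1)^{|J|} η x ∏_{j∈J} α_j)`. -/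
def PhiRC {m : ℕ} (α : Fin m → F) (η : F) (J : Finset (Fin m)) (x : F) : F :=
  (∏ j ∈ J, (x - α j)) * (1 + (-1 : F) ^ J.card * η * x * ∏ j ∈ J, α j)

/-- `Ψ_J(x) = ∏_{j∈J}(x−α_j)·(1 + ηx + η Σ_{j∈J} α_j)`. -/
def PsiRC {m : ℕ} (α : Fin m → F) (η : F) (J : Finset (Fin m)) (x : F) : F :=
  (∏ j ∈ J, (x - α j)) * (1 + η * x + η * ∑ j ∈ J, α j)

/-- `Φ_{J,h}(x) = ∏_{j∈J}(x−α_j)·(1 + (−1)^{k−1−h} η σ_{k−h}(α_J, x))`. -/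
def PhiRCh {m : ℕ} (α : Fin m → F) (η : F) (k h : ℕ) (J : Finset (Fin m)) (x : F) : F :=
  (∏ j ∈ J, (x - α j)) *
    (1 + (-1 : F) ^ (k - 1 - h) * η * Multiset.esymm (x ::ₘ J.val.map α) (k - h))

/-- The image of a subgroup of `Fˣ` in `F`. -/
def unitsImage (G : Subgroup Fˣ) : Set F := (fun g : Fˣ => (g : F)) '' (G : Set Fˣ)

end

noncomputable section

variable {F : Type*} [Field F]

/-- The matrix `B` of STATEMENT 13 (with `k = r+1`): the `i`-th row, for `i ≤ k−2`, is
`(α_j^i, …, b^i−λc^i)` and the last row is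
`(α_j^{k−1}+η α_j^k, …, b^{k−1}−λc^{k−1}+η(b^k−λc^k))`. -/
def Bmat13 {r : ℕ} (β : Fin r → F) (b c lam η : F) :
    Matrix (Fin (r + 1)) (Fin (r + 1)) F :=
  Matrix.of fun i j =>
    if hj : (j : ℕ) < r then
      if (i : ℕ) < r then β ⟨j, hj⟩ ^ (i : ℕ)
      else β ⟨j, hj⟩ ^ r + η * β ⟨j, hj⟩ ^ (r + 1)
    else
      if (i : ℕ) < r then b ^ (i : ℕ) - lam * c ^ (i : ℕ)
      else b ^ r - lam * c ^ r + η * (b ^ (r + 1) - lam * c ^ (r + 1))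

lemma Ioi_castSucc' {n : ℕ} (i : Fin n) :
    Finset.Ioi (Fin.castSucc i) = insert (Fin.last n) ((Finset.Ioi i).map Fin.castSuccEmb) := by
  ext j
  induction j using Fin.lastCases with
  | last => simp [Fin.castSucc_lt_last]
  | cast j =>
      simp only [Finset.mem_Ioi, Fin.castSucc_lt_castSucc_iff, Finset.mem_insert,
        (Fin.castSucc_lt_last j).ne, false_or, Finset.mem_map, Fin.coe_castSuccEmb, Function.Embedding.coeFn_mk]
      constructor
      · intro h; exact ⟨j, by simpa using h, rfl⟩
      · rintro ⟨a, ha, h⟩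
        have : a = j := Fin.castSucc_injective _ (by simpa [Fin.castSuccEmb] using h)
        simpa [this] using ha

lemma prod_pairs_snoc {n : ℕ} (β : Fin n → F) (x : F) :
    (∏ i : Fin (n+1), ∏ j ∈ Finset.Ioi i, ((Fin.snoc β x : Fin (n+1) → F) j - (Fin.snoc β x : Fin (n+1) → F) i)) =
      (∏ i : Fin n, ∏ j ∈ Finset.Ioi i, (β j - β i)) * ∏ i : Fin n, (x - β i) := by
  rw [Fin.prod_univ_castSucc]
  have hlast : Finset.Ioi (Fin.last n) = ∅ := by
    ext j; simp [Fin.le_last j, not_lt.2 (Fin.le_last j)]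
  rw [hlast]
  simp only [Finset.prod_empty, mul_one]
  have : ∀ i : Fin n, (∏ j ∈ Finset.Ioi (Fin.castSucc i),
      ((Fin.snoc β x : Fin (n+1) → F) j - (Fin.snoc β x : Fin (n+1) → F) (Fin.castSucc i))) =
      (x - β i) * ∏ j ∈ Finset.Ioi i, (β j - β i) := by
    intro i
    have hnot : Fin.last n ∉ (Finset.Ioi i).map Fin.castSuccEmb := by
      intro h
      obtain ⟨a, -, ha⟩ := Finset.mem_map.1 h
      exact (Fin.castSucc_lt_last a).ne ha
    rw [Ioi_castSucc', Finset.prod_insert hnot, Finset.prod_map]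
    simp only [Fin.coe_castSuccEmb, Fin.snoc_castSucc, Fin.snoc_last]
  simp_rw [this]
  rw [Finset.prod_mul_distrib]
  ring

lemma detW {n : ℕ} (γ : Fin (n+1) → F) :
    (((Matrix.vandermonde γ)ᵀ).updateRow (Fin.last n) (fun j => γ j ^ (n+1))).det
      = (∑ j, γ j) * (Matrix.vandermonde γ).det := by
  set P : Polynomial F := ∏ k : Fin (n+1), (X - C (γ k)) with hP
  have hmonic : P.Monic := monic_prod_of_monic _ _ fun k _ => monic_X_sub_C (γ k)
  have hdeg : P.natDegree = n + 1 := by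
    rw [hP, natDegree_prod_of_monic _ _ fun k _ => monic_X_sub_C (γ k)]
    simp
  have hpow : ∀ j, γ j ^ (n + 1) = ∑ k : Fin (n+1), (-(P.coeff (k : ℕ))) * γ j ^ (k : ℕ) := by
    intro j
    have heval : P.eval (γ j) = 0 := by
      rw [hP, eval_prod]
      exact Finset.prod_eq_zero (Finset.mem_univ j) (by simp)
    have := eval_eq_sum_range (p := P) (x := γ j)
    rw [heval, hdeg, Finset.sum_range_succ] at this
    have hlead : P.coeff (n + 1) = 1 := by
      have := hmonic.leadingCoeff
      rwa [leadingCoeff, hdeg] at this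
    rw [hlead, one_mul] at this
    have : γ j ^ (n + 1) = ∑ i ∈ Finset.range (n + 1), (-(P.coeff i)) * γ j ^ i := by
      simp only [neg_mul, Finset.sum_neg_distrib]
      linear_combination -this
    rw [this, Fin.sum_univ_eq_sum_range (fun i => (-(P.coeff i)) * γ j ^ i)]
  have hrow : (fun j => γ j ^ (n + 1)) =
      ∑ k : Fin (n+1), (-(P.coeff (k : ℕ))) • ((Matrix.vandermonde γ)ᵀ) k := by
    funext j
    simp only [Finset.sum_apply, Pi.smul_apply, Matrix.transpose_apply,
      Matrix.vandermonde_apply, smul_eq_mul]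
    exact hpow j
  rw [hrow, Matrix.det_updateRow_sum, Matrix.det_transpose]
  have hcoeff : P.coeff n = -∑ j, γ j := by
    have := prod_X_sub_C_coeff_card_pred (Finset.univ : Finset (Fin (n+1))) γ (by simp)
    simpa using this
  simp [Fin.val_last, hcoeff, smul_eq_mul]

/-- The matrix with last column given by powers of `x`. -/
def Mmat {r : ℕ} (β : Fin r → F) (η x : F) : Matrix (Fin (r + 1)) (Fin (r + 1)) F :=
  Matrix.of fun i j =>
    if (i : ℕ) < r then (Fin.snoc β x : Fin (r+1) → F) j ^ (i : ℕ)
    else (Fin.snoc β x : Fin (r+1) → F) j ^ r + η * (Fin.snoc β x : Fin (r+1) → F) j ^ (r + 1)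

lemma detM {r : ℕ} (β : Fin r → F) (η x : F) :
    (Mmat β η x).det =
      (∏ i : Fin r, ∏ j ∈ Finset.Ioi i, (β j - β i)) *
        ((∏ i : Fin r, (x - β i)) * (1 + η * x + η * ∑ i, β i)) := by
  set γ : Fin (r+1) → F := Fin.snoc β x with hγ
  have hM : Mmat β η x = ((Matrix.vandermonde γ)ᵀ).updateRow (Fin.last r)
      ((((Matrix.vandermonde γ)ᵀ) (Fin.last r)) + η • fun j => γ j ^ (r + 1)) := by
    ext i j
    rcases lt_or_ge (i : ℕ) r with hi | hi
    · have hne : i ≠ Fin.last r := by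
        intro h; rw [h] at hi; simp at hi
      rw [Matrix.updateRow_ne hne]
      simp [Mmat, hi, Matrix.vandermonde_apply, hγ]
    · have heq : i = Fin.last r := by
        apply Fin.ext; simpa [Fin.last] using le_antisymm (Nat.lt_succ_iff.1 i.isLt) hi
      subst heq
      rw [Matrix.updateRow_self]
      simp [Mmat, Matrix.vandermonde_apply, smul_eq_mul, hγ]
  rw [hM, Matrix.det_updateRow_add, Matrix.updateRow_eq_self, Matrix.det_updateRow_smul,
    detW, Matrix.det_transpose, Matrix.det_vandermonde]
  have hprod := prod_pairs_snoc β x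
  have hsum : (∑ j, γ j) = (∑ i, β i) + x := by
    rw [hγ, Fin.sum_univ_castSucc]
    simp
  rw [hprod, hsum]
  ring

theorem stmt13 {r : ℕ} (β : Fin r → F) (hβ : Function.Injective β) (b c lam η : F) :
    (Bmat13 β b c lam η).det =
      (∏ j : Fin r, ∏ l ∈ Finset.Ioi j, (β l - β j)) *
        ((∏ j : Fin r, (b - β j)) * (1 + η * b + η * ∑ j : Fin r, β j) -
          lam * ((∏ j : Fin r, (c - β j)) * (1 + η * c + η * ∑ j : Fin r, β j))) := by
  have hB : Bmat13 β b c lam η = (Mmat β η b).updateCol (Fin.last r)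
      ((fun i => (Mmat β η b) i (Fin.last r)) + (-lam) • (fun i => (Mmat β η c) i (Fin.last r))) := by
    ext i j
    by_cases hj : j = Fin.last r
    · subst hj
      rw [Matrix.updateCol_self]
      have hjr : ¬ ((Fin.last r : Fin (r+1)) : ℕ) < r := by simp
      rcases lt_or_ge (i : ℕ) r with hi | hi
      · simp only [Bmat13, Mmat, Matrix.of_apply, Pi.add_apply, Pi.smul_apply, dif_neg hjr,
          if_pos hi, smul_eq_mul, Fin.snoc_last]
        ring
      · simp only [Bmat13, Mmat, Matrix.of_apply, Pi.add_apply, Pi.smul_apply, dif_neg hjr,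
          if_neg (not_lt.2 hi), smul_eq_mul, Fin.snoc_last]
        ring
    · rw [Matrix.updateCol_ne hj]
      have hjr : (j : ℕ) < r := by
        rcases Nat.lt_succ_iff_lt_or_eq.1 j.isLt with h | h
        · exact h
        · exact absurd (Fin.ext h) hj
      have hsnoc : (Fin.snoc β b : Fin (r+1) → F) j = β ⟨j, hjr⟩ := by
        simp only [Fin.snoc, hjr, dif_pos, cast_eq]
        rfl
      simp only [Bmat13, Mmat, Matrix.of_apply, dif_pos hjr, hsnoc]
  have hcol : (Mmat β η b).updateCol (Fin.last r)
      (fun i => (Mmat β η c) i (Fin.last r)) = Mmat β η c := by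
    ext i j
    by_cases hj : j = Fin.last r
    · subst hj; rw [Matrix.updateCol_self]
    · rw [Matrix.updateCol_ne hj]
      have hjr : (j : ℕ) < r := by
        rcases Nat.lt_succ_iff_lt_or_eq.1 j.isLt with h | h
        · exact h
        · exact absurd (Fin.ext h) hj
      have h1 : (Fin.snoc β b : Fin (r+1) → F) j = (Fin.snoc β c : Fin (r+1) → F) j := by
        simp [Fin.snoc, hjr]
      simp only [Mmat, Matrix.of_apply, h1]
  rw [hB, Matrix.det_updateCol_add, Matrix.updateCol_eq_self,
    Matrix.det_updateCol_smul, hcol, detM, detM]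
  ring

end
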